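/- Suppose the circuit C accepts input x with probability 1, i.e., Π_acc U_T⋯U_1 |χ⟩ = U_T⋯U_1 |χ⟩ where |χ⟩ = |x⟩ ⊗ |0…0⟩ and Π_acc = |1⟩⟨1| on the output qubit. Then the history state |η⟩ = (1/√(T+1)) Σ_{t=0}^T (U_t⋯U_1 |χ⟩) ⊗ |t⟩ satisfies ⟨η| H_x |η⟩ = 0, where H_x = Σ_i H_in^i + H_out + Σ_t H_prop^t is the Feynman–Kitaev Hamiltonian. -/

import Mathlib

open Matrix Kronecker Finset Real

lemma FK_kron_mulVec {α β : Type*} [Fintype α] [Fintype β]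
    (A : Matrix α α ℂ) (u v : β → ℂ) (w : α → ℂ) (c : β → ℂ) :
    (A ⊗ₖ vecMulVec u v) *ᵥ (fun p : α × β => w p.1 * c p.2)
      = fun p => (A *ᵥ w) p.1 * ((v ⬝ᵥ c) * u p.2) := by
  funext p
  simp only [mulVec, dotProduct, Fintype.sum_prod_type, kroneckerMap_apply,
    vecMulVec_apply]
  rw [Finset.sum_mul]
  refine Finset.sum_congr rfl fun a _ => ?_
  rw [Finset.sum_mul, Finset.mul_sum]
  refine Finset.sum_congr rfl fun j _ => ?_
  ring

lemma FK_sum_mulVec {ι α : Type*} [Fintype α] (s : Finset ι)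
    (M : ι → Matrix α α ℂ) (v : α → ℂ) :
    (∑ i ∈ s, M i) *ᵥ v = ∑ i ∈ s, M i *ᵥ v :=
  map_sum (Matrix.mulVec.addMonoidHomLeft v) _ _

lemma FK_mulVec_sum {ι α : Type*} [Fintype α] (s : Finset ι)
    (M : Matrix α α ℂ) (v : ι → α → ℂ) :
    M *ᵥ (∑ i ∈ s, v i) = ∑ i ∈ s, M *ᵥ v i :=
  map_sum M.mulVecLin _ _

theorem stmt10 (S n T : ℕ) (hn : n ≤ S) (hS : 0 < S)
    (x : Fin n → Fin 2)
    (U W : ℕ → Matrix (Fin S → Fin 2) (Fin S → Fin 2) ℂ)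
    (hU : ∀ t, U t ∈ Matrix.unitaryGroup (Fin S → Fin 2) ℂ)
    (hW0 : W 0 = 1) (hW : ∀ t, W (t + 1) = U (t + 1) * W t)
    (b : ℕ → Fin (T + 1) → ℂ)
    (hb : ∀ k ≤ T, b k = fun i : Fin (T + 1) => if (i : ℕ) = k then (1 : ℂ) else 0)
    (χ : (Fin S → Fin 2) → ℂ)
    (hχ : χ = fun f => if (∀ i : Fin n, f (Fin.castLE hn i) = x i) ∧
        (∀ j : Fin S, n ≤ (j : ℕ) → f j = 0) then 1 else 0)
    -- the circuit accepts with certainty: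
    (hacc : (Matrix.diagonal fun f : Fin S → Fin 2 =>
        if f ⟨0, hS⟩ = 1 then (1 : ℂ) else 0) *ᵥ (W T *ᵥ χ) = W T *ᵥ χ)
    (Hx : Matrix ((Fin S → Fin 2) × Fin (T + 1)) ((Fin S → Fin 2) × Fin (T + 1)) ℂ)
    (hHx : Hx =
      (∑ i : Fin n, (Matrix.diagonal fun f : Fin S → Fin 2 =>
          if f (Fin.castLE hn i) = x i then (0 : ℂ) else 1)
            ⊗ₖ vecMulVec (b 0) (star (b 0)))
      + (Matrix.diagonal fun f : Fin S → Fin 2 =>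
          if f ⟨0, hS⟩ = 0 then (1 : ℂ) else 0) ⊗ₖ vecMulVec (b T) (star (b T))
      + ∑ t ∈ Finset.Icc 1 T, (1/2 : ℂ) •
          ((1 : Matrix (Fin S → Fin 2) (Fin S → Fin 2) ℂ) ⊗ₖ vecMulVec (b t) (star (b t))
            + (1 : Matrix (Fin S → Fin 2) (Fin S → Fin 2) ℂ)
                ⊗ₖ vecMulVec (b (t-1)) (star (b (t-1)))
            - U t ⊗ₖ vecMulVec (b t) (star (b (t-1)))
            - (U t)ᴴ ⊗ₖ vecMulVec (b (t-1)) (star (b t))))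
    (η : (Fin S → Fin 2) × Fin (T + 1) → ℂ)
    (hη : η = ((Real.sqrt (T + 1) : ℂ))⁻¹ • ∑ t ∈ Finset.range (T + 1),
        fun p : (Fin S → Fin 2) × Fin (T + 1) => (W t *ᵥ χ) p.1 * b t p.2) :
    star η ⬝ᵥ (Hx *ᵥ η) = 0 := by
  classical
  -- evolution of the history state
  have hψs : ∀ t : ℕ, 1 ≤ t → W t *ᵥ χ = U t *ᵥ (W (t - 1) *ᵥ χ) := by
    intro t ht
    cases t with
    | zero => omega
    | succ t' =>
      simp only [Nat.add_sub_cancel]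
      rw [hW t', ← mulVec_mulVec]
  have hUU : ∀ t : ℕ, ∀ v : (Fin S → Fin 2) → ℂ, (U t)ᴴ *ᵥ (U t *ᵥ v) = v := by
    intro t v
    rw [mulVec_mulVec, ← star_eq_conjTranspose, Unitary.star_mul_self_of_mem (hU t),
      one_mulVec]
  -- orthonormality of the clock basis
  have horth : ∀ k l : ℕ, k ≤ T → l ≤ T →
      star (b k) ⬝ᵥ b l = if l = k then (1 : ℂ) else 0 := by
    intro k l hk hl
    rw [hb k hk, hb l hl]
    simp only [dotProduct, Pi.star_apply]
    rw [Finset.sum_eq_single (⟨k, by omega⟩ : Fin (T + 1))]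
    · by_cases h : l = k
      · simp [h]
      · simp [h, Ne.symm h]
    · intro j _ hj
      have hjk : (j : ℕ) ≠ k := fun hc => hj (Fin.ext hc)
      simp [hjk]
    · intro h; exact absurd (Finset.mem_univ _) h
  -- the input penalties annihilate χ
  have hχin : ∀ i : Fin n,
      (Matrix.diagonal fun f : Fin S → Fin 2 =>
        if f (Fin.castLE hn i) = x i then (0 : ℂ) else 1) *ᵥ χ = 0 := by
    intro i
    funext f
    rw [mulVec_diagonal]
    by_cases h : f (Fin.castLE hn i) = x i
    · simp [h]
    · have hc : ¬((∀ i' : Fin n, f (Fin.castLE hn i') = x i') ∧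
          (∀ j : Fin S, n ≤ (j : ℕ) → f j = 0)) := fun hc => h (hc.1 i)
      simp [hχ, hc]
  -- the output penalty annihilates the final state
  have hχout : (Matrix.diagonal fun f : Fin S → Fin 2 =>
      if f ⟨0, hS⟩ = 0 then (1 : ℂ) else 0) *ᵥ (W T *ᵥ χ) = 0 := by
    funext f
    have h := congrFun hacc f
    rw [mulVec_diagonal] at h
    rw [mulVec_diagonal]
    by_cases h1 : f ⟨0, hS⟩ = 1
    · rw [if_neg (by rw [h1]; decide), zero_mul]; simp
    · have h0 : f ⟨0, hS⟩ = 0 := by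
        have hlt := (f ⟨0, hS⟩).isLt
        rw [Fin.ext_iff] at h1 ⊢
        simp only [Fin.val_one, Fin.val_zero] at *
        omega
      rw [if_neg (by rw [h0]; decide), zero_mul] at h
      rw [if_pos h0, one_mul, ← h]
      simp
  set Φ : ((Fin S → Fin 2) × Fin (T + 1)) → ℂ :=
    ∑ t ∈ Finset.range (T + 1),
      fun p : (Fin S → Fin 2) × Fin (T + 1) => (W t *ᵥ χ) p.1 * b t p.2 with hΦ
  -- picking out one clock component
  have hpick : ∀ (A : Matrix (Fin S → Fin 2) (Fin S → Fin 2) ℂ) (k l : ℕ),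
      k ≤ T → l ≤ T →
      (A ⊗ₖ vecMulVec (b k) (star (b l))) *ᵥ Φ
        = fun p => (A *ᵥ (W l *ᵥ χ)) p.1 * b k p.2 := by
    intro A k l hk hl
    rw [hΦ, FK_mulVec_sum]
    have hterm : ∀ s ∈ Finset.range (T + 1),
        (A ⊗ₖ vecMulVec (b k) (star (b l))) *ᵥ
            (fun p : (Fin S → Fin 2) × Fin (T + 1) => (W s *ᵥ χ) p.1 * b s p.2)
          = if s = l then (fun p : (Fin S → Fin 2) × Fin (T + 1) =>
              (A *ᵥ (W l *ᵥ χ)) p.1 * b k p.2) else 0 := by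
      intro s hs
      have hs' : s ≤ T := by
        have := Finset.mem_range.mp hs; omega
      rw [FK_kron_mulVec, horth l s hl hs']
      by_cases h : s = l
      · subst h; simp
      · funext p; simp [h]
    rw [Finset.sum_congr rfl hterm, Finset.sum_ite_eq' (Finset.range (T + 1)) l,
      if_pos (Finset.mem_range.mpr (by omega))]
  -- the Hamiltonian annihilates the history state
  have hzero : Hx *ᵥ η = 0 := by
    rw [hη, hHx, mulVec_smul, add_mulVec, add_mulVec, FK_sum_mulVec, FK_sum_mulVec]
    have g1 : ∀ i : Fin n,
        ((Matrix.diagonal fun f : Fin S → Fin 2 =>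
            if f (Fin.castLE hn i) = x i then (0 : ℂ) else 1)
          ⊗ₖ vecMulVec (b 0) (star (b 0))) *ᵥ Φ = 0 := by
      intro i
      rw [hpick _ 0 0 (Nat.zero_le T) (Nat.zero_le T)]
      funext p
      rw [hW0, one_mulVec, hχin i]
      simp
    have g2 : ((Matrix.diagonal fun f : Fin S → Fin 2 =>
          if f ⟨0, hS⟩ = 0 then (1 : ℂ) else 0)
        ⊗ₖ vecMulVec (b T) (star (b T))) *ᵥ Φ = 0 := by
      rw [hpick _ T T le_rfl le_rfl]
      funext p
      rw [hχout]
      simp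
    have g3 : ∀ t ∈ Finset.Icc 1 T,
        ((1/2 : ℂ) •
          ((1 : Matrix (Fin S → Fin 2) (Fin S → Fin 2) ℂ) ⊗ₖ vecMulVec (b t) (star (b t))
            + (1 : Matrix (Fin S → Fin 2) (Fin S → Fin 2) ℂ)
                ⊗ₖ vecMulVec (b (t-1)) (star (b (t-1)))
            - U t ⊗ₖ vecMulVec (b t) (star (b (t-1)))
            - (U t)ᴴ ⊗ₖ vecMulVec (b (t-1)) (star (b t)))) *ᵥ Φ = 0 := by
      intro t ht
      obtain ⟨ht1, ht2⟩ := Finset.mem_Icc.mp ht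
      have ht3 : t - 1 ≤ T := by omega
      rw [smul_mulVec, sub_mulVec, sub_mulVec, add_mulVec,
        hpick _ t t ht2 ht2, hpick _ (t-1) (t-1) ht3 ht3,
        hpick _ t (t-1) ht2 ht3, hpick _ (t-1) t ht3 ht2]
      simp only [one_mulVec]
      rw [show U t *ᵥ (W (t-1) *ᵥ χ) = W t *ᵥ χ from (hψs t ht1).symm,
        show (U t)ᴴ *ᵥ (W t *ᵥ χ) = W (t-1) *ᵥ χ by rw [hψs t ht1, hUU],
        add_sub_cancel_left, sub_self, smul_zero]
    rw [Finset.sum_congr rfl (fun i _ => g1 i), Finset.sum_congr rfl g3, g2]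
    simp
  rw [hzero, dotProduct_zero]
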